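/- For n ≥ 1, k ≥ 1, ℓ ≥ 1, and any set I of nonnegative integers, the number of sequences (d_0,...,d_n) with d_0 = ℓ, d_1,...,d_n ∈ I, d_0+⋯+d_n = n, and d_0+⋯+d_{i-1} ≥ i for all i in {1,...,n}, equals (ℓ/n) times the coefficient of z^{n-ℓ} in (Σ_{i∈I} z^i)^n. -/

import Mathlib

open Finset

lemma rot1_sum {M : Type*} [AddCommMonoid M] (n : ℕ) (g : ℕ → M) :
    ∑ t ∈ range n, g ((t + 1) % n) = ∑ t ∈ range n, g t := by
  rcases Nat.eq_zero_or_pos n with rfl | hn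
  · simp
  obtain ⟨m, rfl⟩ := Nat.exists_eq_add_of_le hn
  rw [add_comm 1 m]
  rw [Finset.sum_range_succ (fun t => g ((t + 1) % (m+1))), Finset.sum_range_succ']
  congr 1
  · apply Finset.sum_congr rfl
    intro t ht
    simp only [mem_range] at ht
    rw [Nat.mod_eq_of_lt (by omega)]
  · rw [Nat.mod_self]

lemma rot_sum {M : Type*} [AddCommMonoid M] (n : ℕ) (g : ℕ → M) (r : ℕ) :
    ∑ t ∈ range n, g ((t + r) % n) = ∑ t ∈ range n, g t := by
  induction r with
  | zero =>
    exact Finset.sum_congr rfl fun t ht => by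
      simp [Nat.mod_eq_of_lt (by simpa using ht : t < n)]
  | succ r ih =>
    calc ∑ t ∈ range n, g ((t + (r+1)) % n)
        = ∑ t ∈ range n, (fun j => g ((j + r) % n)) ((t + 1) % n) := by
          apply Finset.sum_congr rfl; intro t _
          simp only [Nat.mod_add_mod]
          ring_nf
      _ = ∑ t ∈ range n, g ((t + r) % n) := rot1_sum n (fun j => g ((j + r) % n))
      _ = ∑ t ∈ range n, g t := ih

namespace CycleAux

variable (n : ℕ) (e : ℕ → ℕ)

/-- prefix sums of the (-1)-shifted periodized sequence -/
def S (m : ℕ) : ℤ := ∑ j ∈ range m, ((e (j % n) : ℤ) - 1)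

/-- running minimum of `S` on `[0, m]` -/
def Mn (m : ℕ) : ℤ := (range (m+1)).inf' nonempty_range_add_one (S n e)

lemma S_zero : S n e 0 = 0 := by simp [S]

lemma S_succ (m : ℕ) : S n e (m+1) = S n e m + ((e (m % n) : ℤ) - 1) := by
  simp only [S, Finset.sum_range_succ]

lemma S_window (r m : ℕ) :
    S n e (r + m) = S n e r + ∑ t ∈ range m, ((e ((t + r) % n) : ℤ) - 1) := by
  induction m with
  | zero => simp
  | succ m ih =>
    rw [← Nat.add_assoc, S_succ, ih, Finset.sum_range_succ]
    have h : (r + m) % n = (m + r) % n := by rw [Nat.add_comm]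
    rw [h]; ring

lemma S_add (ℓ : ℕ) (hsum : ∑ t ∈ range n, e t + ℓ = n) (m : ℕ) :
    S n e (m + n) = S n e m - ℓ := by
  rw [S_window]
  have h1 : ∑ t ∈ range n, ((e ((t + m) % n) : ℤ) - 1)
      = ∑ t ∈ range n, ((e (t % n) : ℤ) - 1) := by
    have := rot_sum n (fun j => ((e (j % n) : ℤ) - 1)) m
    simpa [Nat.mod_mod_of_dvd] using this
  have h2 : ∑ t ∈ range n, ((e (t % n) : ℤ) - 1) = - (ℓ : ℤ) := by
    have h3 : ∀ t ∈ range n, ((e (t % n) : ℤ) - 1) = ((e t : ℤ) - 1) := by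
      intro t ht
      rw [Nat.mod_eq_of_lt (by simpa using ht)]
    rw [Finset.sum_congr rfl h3, Finset.sum_sub_distrib]
    simp only [Finset.sum_const, Finset.card_range, nsmul_eq_mul, mul_one]
    have h4 : ((∑ t ∈ range n, e t : ℕ) : ℤ) + (ℓ : ℤ) = (n : ℤ) := by exact_mod_cast hsum
    push_cast at h4 ⊢
    omega
  rw [h1, h2]; ring

lemma Mn_zero : Mn n e 0 = 0 := by simp [Mn, S_zero]

lemma Mn_succ (m : ℕ) : Mn n e (m+1) = S n e (m+1) ⊓ Mn n e m := by
  rw [Mn, Finset.inf'_congr nonempty_range_add_one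
    (Finset.range_add_one : range (m+1+1) = insert (m+1) (range (m+1))) (fun x _ => rfl),
    Finset.inf'_insert]
  rfl

lemma Mn_le_S (m : ℕ) : Mn n e m ≤ S n e m :=
  (Finset.inf'_le_iff nonempty_range_add_one).mpr ⟨m, by simp, le_rfl⟩

lemma Mn_step (m : ℕ) :
    Mn n e (m+1) = Mn n e m - (if S n e (m+1) < Mn n e m then 1 else 0) := by
  have hstep : S n e m - 1 ≤ S n e (m+1) := by
    rw [S_succ]
    have h : (0:ℤ) ≤ (e (m % n) : ℤ) := Int.natCast_nonneg _
    linarith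
  have hMS := Mn_le_S n e m
  rw [Mn_succ]
  by_cases h : S n e (m+1) < Mn n e m
  · simp only [h, if_true]
    rw [inf_eq_left.mpr (le_of_lt h)]
    omega
  · simp only [h, if_false]
    rw [inf_eq_right.mpr (by omega)]
    omega

lemma telescope (m : ℕ) :
    (((Icc 1 m).filter (fun i => S n e i < Mn n e (i-1))).card : ℤ) = - Mn n e m := by
  induction m with
  | zero => simp [Mn_zero]
  | succ m ih =>
    have hins : Icc 1 (m+1) = insert (m+1) (Icc 1 m) := by
      ext x; simp only [Finset.mem_insert, Finset.mem_Icc]; omega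
    rw [hins, Finset.filter_insert]
    have hnm : (m+1) ∉ (Icc 1 m).filter (fun i => S n e i < Mn n e (i-1)) := by
      simp
    rw [Mn_step]
    by_cases h : S n e (m+1) < Mn n e m
    · rw [if_pos (by simpa using h), Finset.card_insert_of_notMem hnm]
      push_cast
      rw [if_pos h]
      omega
    · rw [if_neg (by simpa using h), if_neg h]
      omega

lemma inf'_sub_const {s : Finset ℕ} (hs : s.Nonempty) (f : ℕ → ℤ) (c : ℤ) :
    s.inf' hs (fun i => f i - c) = s.inf' hs f - c := by
  apply le_antisymm
  · obtain ⟨i, hi, hieq⟩ := Finset.exists_mem_eq_inf' hs f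
    calc s.inf' hs (fun i => f i - c)
        ≤ f i - c := (Finset.inf'_le_iff hs).mpr ⟨i, hi, le_rfl⟩
      _ = s.inf' hs f - c := by rw [hieq]
  · apply Finset.le_inf'
    intro i hi
    have h : s.inf' hs f ≤ f i := (Finset.inf'_le_iff hs).mpr ⟨i, hi, le_rfl⟩
    linarith

lemma Mn_shift (N ℓ : ℕ) (hsum : ∑ t ∈ range (N+1), e t + ℓ = N+1) :
    Mn (N+1) e (N + (N+1)) = Mn (N+1) e N - ℓ := by
  have hr : range (N + (N+1) + 1)
      = range (N+1) ∪ (range (N+1)).map (addLeftEmbedding (N+1)) := by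
    rw [← Finset.range_add]
    congr 1
    omega
  rw [Mn, Finset.inf'_congr nonempty_range_add_one hr (fun x _ => rfl),
    Finset.inf'_union nonempty_range_add_one (by simp [Finset.map_nonempty])]
  have h2 : ((range (N+1)).map (addLeftEmbedding (N+1))).inf'
      (by simp [Finset.map_nonempty]) (S (N+1) e) = Mn (N+1) e N - ℓ := by
    rw [Finset.inf'_map]
    have h3 : ∀ i ∈ range (N+1),
        (S (N+1) e ∘ addLeftEmbedding (N+1)) i = (fun i => S (N+1) e i - ℓ) i := by
      intro i _
      simp only [Function.comp_apply, addLeftEmbedding_apply]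
      rw [Nat.add_comm (N+1) i, S_add (N+1) e ℓ hsum]
    rw [Finset.inf'_congr _ rfl h3, inf'_sub_const]
    rfl
  rw [h2]
  show Mn (N+1) e N ⊓ (Mn (N+1) e N - ℓ) = _
  exact inf_eq_right.mpr (by omega)

end CycleAux

open scoped Classical in
open CycleAux in
lemma cycle_lemma (N ℓ : ℕ) (hℓ : 1 ≤ ℓ) (e : ℕ → ℕ)
    (hsum : ∑ t ∈ range (N+1), e t + ℓ = N+1) :
    ((range (N+1)).filter (fun r => ∀ i ∈ Icc 1 (N+1),
      (i : ℕ) ≤ ℓ + ∑ t ∈ range (i-1), e ((t + r) % (N+1)))).card = ℓ := by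
  set n := N + 1 with hn
  -- window sums in terms of S
  have hA : ∀ r m : ℕ, (∑ t ∈ range m, (e ((t + r) % n) : ℤ))
      = S n e (r + m) - S n e r + m := by
    intro r m
    rw [S_window]
    rw [Finset.sum_sub_distrib]
    simp [Finset.card_range]
  have hSadd : ∀ m, S n e (m + n) = S n e m - ℓ := S_add n e ℓ hsum
  -- good ↔ record
  have hgood : ∀ r, r < n →
      ((∀ i ∈ Icc 1 n, (i : ℕ) ≤ ℓ + ∑ t ∈ range (i-1), e ((t + r) % n)) ↔
        S n e (r + n) < Mn n e (r + n - 1)) := by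
    intro r hr
    have hMn : Mn n e (r + n - 1) = (range (r + n)).inf' (by
        exact nonempty_range_iff.mpr (by omega)) (S n e) := by
      rw [Mn]
      congr 1
      all_goals omega
    constructor
    · intro hgd
      rw [hMn, Finset.lt_inf'_iff]
      -- first: the window bound for all m < n
      have hwin : ∀ m, m < n → S n e r + 1 - ℓ ≤ S n e (r + m) := by
        intro m hm
        have h1 := hgd (m+1) (by simp [hn]; omega)
        have h2 : ((m+1 : ℕ) : ℤ) ≤ (ℓ : ℤ) + ∑ t ∈ range m, (e ((t + r) % n) : ℤ) := by
          push_cast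
          exact_mod_cast h1
        rw [hA r m] at h2
        push_cast at h2
        linarith
      intro j hj
      simp only [mem_range] at hj
      rcases le_or_gt r j with hjr | hjr
      · have hm : j - r < n := by omega
        have := hwin (j - r) hm
        have hje : r + (j - r) = j := by omega
        rw [hje] at this
        rw [hSadd r]
        omega
      · -- j < r
        have hm1 : 1 ≤ j + n - r := by omega
        have hm2 : j + n - r < n := by omega
        have := hwin (j + n - r) hm2
        have hje : r + (j + n - r) = j + n := by omega
        rw [hje, hSadd j] at this
        rw [hSadd r]
        omega
    · intro hrec i hi
      simp only [mem_Icc] at hi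
      obtain ⟨hi1, hi2⟩ := hi
      rw [hMn, Finset.lt_inf'_iff] at hrec
      have hj : r + (i - 1) ∈ range (r + n) := by simp; omega
      have h1 := hrec _ hj
      rw [hSadd r] at h1
      have h2 := hA r (i - 1)
      have h3 : ((∑ t ∈ range (i-1), e ((t + r) % n) : ℕ) : ℤ)
          = S n e (r + (i-1)) - S n e r + (i - 1 : ℕ) := by
        rw [Nat.cast_sum, hA r (i-1)]
      have : (i : ℤ) ≤ (ℓ : ℤ) + ((∑ t ∈ range (i-1), e ((t + r) % n) : ℕ) : ℤ) := by
        rw [h3]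
        have hcast : ((i - 1 : ℕ) : ℤ) = (i : ℤ) - 1 := by omega
        rw [hcast]
        omega
      exact_mod_cast this
  -- bijection with records in [n, N + n]
  have hbij : ((range n).filter (fun r => ∀ i ∈ Icc 1 n,
      (i : ℕ) ≤ ℓ + ∑ t ∈ range (i-1), e ((t + r) % n))).card
      = ((Icc n (N + n)).filter (fun m => S n e m < Mn n e (m-1))).card := by
    apply Finset.card_bij' (fun r _ => r + n) (fun m _ => m - n)
    · intro r hr
      simp only [Finset.mem_filter, mem_range] at hr
      simp only [Finset.mem_filter, mem_Icc]
      exact ⟨⟨by omega, by omega⟩, (hgood r hr.1).mp hr.2⟩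
    · intro m hm
      simp only [Finset.mem_filter, mem_Icc] at hm
      simp only [Finset.mem_filter, mem_range]
      have h1 : m - n < n := by omega
      have h2 : m - n + n = m := by omega
      refine ⟨h1, (hgood (m - n) h1).mpr ?_⟩
      rw [h2]
      exact hm.2
    · intro r hr; omega
    · intro m hm
      simp only [Finset.mem_filter, mem_Icc] at hm
      omega
  rw [hbij]
  -- telescoping count
  have hT1 := telescope n e (N + n)
  have hT2 := telescope n e N
  have hshift : Mn n e (N + n) = Mn n e N - ℓ := Mn_shift e N ℓ hsum
  have hsplit : (Icc 1 (N + n)).filter (fun m => S n e m < Mn n e (m-1))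
      = (Icc 1 N).filter (fun m => S n e m < Mn n e (m-1))
        ∪ (Icc n (N + n)).filter (fun m => S n e m < Mn n e (m-1)) := by
    rw [← Finset.filter_union]
    congr 1
    ext x
    simp only [mem_Icc, Finset.mem_union]
    omega
  have hdisj : Disjoint ((Icc 1 N).filter (fun m => S n e m < Mn n e (m-1)))
      ((Icc n (N + n)).filter (fun m => S n e m < Mn n e (m-1))) := by
    apply Finset.disjoint_left.mpr
    intro a ha hb
    simp only [Finset.mem_filter, mem_Icc] at ha hb
    omega
  rw [hsplit, Finset.card_union_of_disjoint hdisj] at hT1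
  push_cast at hT1
  omega

/-- `d` is the multi-degree sequence of a plane tree with `n+1` nodes:
`d_0 + ⋯ + d_n = n` and `d_0 + ⋯ + d_{i-1} ≥ i` for all `i ∈ {1,…,n}`
(entries beyond index `n` vanish). -/
def IsTreeDeg (n : ℕ) (d : ℕ → ℕ) : Prop :=
  (∀ i, n < i → d i = 0) ∧ (∑ i ∈ Finset.range (n + 1), d i = n) ∧
    (∀ i, 1 ≤ i → i ≤ n → i ≤ ∑ j ∈ Finset.range i, d j)

/-- Proposition `C_I`: the number of plane trees with `n+1` nodes, root of degree `ℓ`,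
and all non-root degrees in `I`, equals `(ℓ/n)·[z^{n-ℓ}] (∑_{i∈I} z^i)^n`. -/
theorem trees_with_degrees_in_set (n k ℓ : ℕ) (I : Set ℕ) [DecidablePred (· ∈ I)]
    (hn : 1 ≤ n) (hk : 1 ≤ k) (hℓ : 1 ≤ ℓ) (hℓn : ℓ ≤ n) :
    n * Nat.card {d : ℕ → ℕ // IsTreeDeg n d ∧ d 0 = ℓ ∧ ∀ i, 1 ≤ i → i ≤ n → d i ∈ I} =
      ℓ * PowerSeries.coeff (n - ℓ)
        ((PowerSeries.mk fun i => if i ∈ I then (1 : ℕ) else 0) ^ n) := by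
  classical
  -- `E` : all admissible non-root degree lists, `GoodF` : tree degree sequences
  set E : Finset (ℕ →₀ ℕ) :=
    (Finset.finsuppAntidiag (range n) (n - ℓ)).filter (fun l => ∀ i ∈ range n, l i ∈ I) with hE
  set GoodF : Finset (ℕ →₀ ℕ) :=
    (Finset.finsuppAntidiag (range (n+1)) n).filter (fun d => d 0 = ℓ ∧
      (∀ i ∈ Icc 1 n, d i ∈ I) ∧ ∀ i ∈ Icc 1 n, (i : ℕ) ≤ ∑ j ∈ range i, d j) with hGoodF
  -- Step A : the coefficient counts `E`
  have hcoeff : (PowerSeries.coeff (n - ℓ))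
      ((PowerSeries.mk fun i => if i ∈ I then (1 : ℕ) else 0) ^ n) = E.card := by
    rw [PowerSeries.coeff_pow]
    have h1 : ∀ l ∈ Finset.finsuppAntidiag (range n) (n - ℓ),
        (∏ i ∈ range n, (PowerSeries.coeff (l i))
          (PowerSeries.mk fun i => if i ∈ I then (1 : ℕ) else 0))
        = if (∀ i ∈ range n, l i ∈ I) then 1 else 0 := by
      intro l _
      simp only [PowerSeries.coeff_mk]
      exact Finset.prod_boole
    rw [Finset.sum_congr rfl h1, Finset.sum_boole]
    simp [hE]
  -- Step B : the subtype is counted by `GoodF`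
  have hGmem : ∀ x : ℕ →₀ ℕ, x ∈ GoodF →
      (IsTreeDeg n x ∧ x 0 = ℓ ∧ ∀ i, 1 ≤ i → i ≤ n → x i ∈ I) := by
    intro x hx
    simp only [hGoodF, Finset.mem_filter, Finset.mem_finsuppAntidiag] at hx
    obtain ⟨⟨hsum, hsupp⟩, h0, hI, hball⟩ := hx
    refine ⟨⟨?_, hsum, ?_⟩, h0, ?_⟩
    · intro i hi
      by_contra hne
      have := hsupp (Finsupp.mem_support_iff.mpr hne)
      simp only [mem_range] at this
      omega
    · intro i h1 h2
      exact hball i (mem_Icc.mpr ⟨h1, h2⟩)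
    · intro i h1 h2
      exact hI i (mem_Icc.mpr ⟨h1, h2⟩)
  have hsub : Nat.card {d : ℕ → ℕ // IsTreeDeg n d ∧ d 0 = ℓ ∧ ∀ i, 1 ≤ i → i ≤ n → d i ∈ I}
      = GoodF.card := by
    rw [← Nat.card_eq_finsetCard]
    apply Nat.card_congr
    apply Equiv.symm
    apply Equiv.ofBijective
      (f := fun x : {x // x ∈ GoodF} =>
        (⟨(x.1 : ℕ → ℕ), hGmem x.1 x.2⟩ :
          {d : ℕ → ℕ // IsTreeDeg n d ∧ d 0 = ℓ ∧ ∀ i, 1 ≤ i → i ≤ n → d i ∈ I}))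
    constructor
    · intro a b h
      exact Subtype.ext (DFunLike.coe_injective (congrArg Subtype.val h))
    · rintro ⟨d, ⟨hvan, hsum, hball⟩, h0, hI⟩
      have hsupp : ∀ i, d i ≠ 0 → i ∈ range (n+1) := by
        intro i hi
        rw [mem_range]
        by_contra hc
        push_neg at hc
        exact hi (hvan i (by omega))
      refine ⟨⟨Finsupp.onFinset (range (n+1)) d hsupp, ?_⟩, ?_⟩
      · simp only [hGoodF, Finset.mem_filter, Finset.mem_finsuppAntidiag]
        refine ⟨⟨hsum, Finsupp.support_onFinset_subset⟩, h0, ?_, ?_⟩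
        · intro i hi
          rw [mem_Icc] at hi
          exact hI i hi.1 hi.2
        · intro i hi
          rw [mem_Icc] at hi
          exact hball i hi.1 hi.2
      · exact Subtype.ext (funext fun i => rfl)
  rw [hsub, hcoeff]
  clear hsub hcoeff hGmem
  -- helpers
  obtain ⟨N, hN⟩ : ∃ N, n = N + 1 := ⟨n - 1, by omega⟩
  have hnpos : 0 < n := hn
  have hmodlt : ∀ a, a % n < n := fun a => Nat.mod_lt _ hnpos
  have hmm : ∀ a, a % n % n = a % n := fun a => Nat.mod_mod_of_dvd a (dvd_refl n)
  have hmod1 : ∀ (j r : ℕ), r < n → ((j + (n - r)) % n + r) % n = j % n := by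
    intro j r hr
    rw [Nat.mod_add_mod]
    have h : j + (n - r) + r = j + n := by omega
    rw [h, Nat.add_mod_right]
  have hmod2 : ∀ (t r : ℕ), r < n → ((t + r) % n + (n - r)) % n = t % n := by
    intro t r hr
    rw [Nat.mod_add_mod]
    have h : t + r + (n - r) = t + n := by omega
    rw [h, Nat.add_mod_right]
  -- the two maps
  set lmap : (ℕ →₀ ℕ) → ℕ → (ℕ →₀ ℕ) := fun d r =>
    Finsupp.onFinset (range n) (fun j => if j < n then d ((j + (n - r)) % n + 1) else 0)
      (fun j h => by
        rw [mem_range]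
        by_contra hc
        push_neg at hc
        apply h
        show (if j < n then d ((j + (n - r)) % n + 1) else 0) = 0
        rw [if_neg (by omega)]) with hlmap
  set dmap : (ℕ →₀ ℕ) → ℕ → (ℕ →₀ ℕ) := fun l r =>
    Finsupp.onFinset (range (n+1))
      (fun i => if i = 0 then ℓ else if i ≤ n then l ((i - 1 + r) % n) else 0)
      (fun i h => by
        rw [mem_range]
        by_contra hc
        push_neg at hc
        apply h
        show (if i = 0 then ℓ else if i ≤ n then l ((i - 1 + r) % n) else 0) = 0
        rw [if_neg (by omega), if_neg (by omega)]) with hdmap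
  have hlm_app : ∀ d r j, j < n → lmap d r j = d ((j + (n - r)) % n + 1) := by
    intro d r j hj
    show (if j < n then d ((j + (n - r)) % n + 1) else 0) = _
    rw [if_pos hj]
  have hlm_rot : ∀ d r t, r < n → t < n → lmap d r ((t + r) % n) = d (t + 1) := by
    intro d r t hr ht
    rw [hlm_app d r _ (hmodlt _), hmod2 t r hr, Nat.mod_eq_of_lt ht]
  have hdm_app : ∀ l r i, 1 ≤ i → i ≤ n → dmap l r i = l ((i - 1 + r) % n) := by
    intro l r i h1 h2
    show (if i = 0 then ℓ else if i ≤ n then l ((i - 1 + r) % n) else 0) = _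
    rw [if_neg (by omega), if_pos h2]
  have hdm_zero : ∀ l r, dmap l r 0 = ℓ := fun l r => rfl
  have hdm_big : ∀ l r i, n < i → dmap l r i = 0 := by
    intro l r i hi
    show (if i = 0 then ℓ else if i ≤ n then l ((i - 1 + r) % n) else 0) = 0
    rw [if_neg (by omega), if_neg (by omega)]
  -- rotation-invariance of sums
  have hrotsum : ∀ (l : ℕ →₀ ℕ) r, (∀ j, n ≤ j → l j = 0) →
      ∑ t ∈ range n, l ((t + r) % n) = ∑ t ∈ range n, l t := by
    intro l r _
    have h := rot_sum n (fun x => l (x % n)) r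
    simp only [hmm] at h
    calc ∑ t ∈ range n, l ((t + r) % n) = ∑ t ∈ range n, l (t % n) := h
      _ = ∑ t ∈ range n, l t := by
          apply Finset.sum_congr rfl; intro t ht
          rw [Nat.mod_eq_of_lt (mem_range.mp ht)]
  have hsupE : ∀ l ∈ E, ∀ j, n ≤ j → l j = 0 := by
    intro l hl j hj
    simp only [hE, Finset.mem_filter, Finset.mem_finsuppAntidiag] at hl
    by_contra hne
    have := hl.1.2 (Finsupp.mem_support_iff.mpr hne)
    simp only [mem_range] at this
    omega
  -- Step C : cycle lemma applied to every element of E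
  have hEgood : ∀ l ∈ E, ((range n).filter (fun r => ∀ i ∈ Icc 1 n,
      (i : ℕ) ≤ ℓ + ∑ t ∈ range (i-1), l ((t + r) % n))).card = ℓ := by
    intro l hl
    simp only [hE, Finset.mem_filter, Finset.mem_finsuppAntidiag] at hl
    have hs : ∑ t ∈ range n, l t + ℓ = n := by
      have h : ∑ t ∈ range n, l t = n - ℓ := hl.1.1
      omega
    subst hN
    exact cycle_lemma N ℓ hℓ l hs
  -- Step D : bijection between GoodF × (range n) and Σ l ∈ E, good rotations
  have hbij : (GoodF ×ˢ range n).card = (E.sigma (fun l => (range n).filter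
      (fun r => ∀ i ∈ Icc 1 n, (i : ℕ) ≤ ℓ + ∑ t ∈ range (i-1), l ((t + r) % n)))).card := by
    apply Finset.card_nbij' (i := fun p => ⟨lmap p.1 p.2, p.2⟩)
      (j := fun q => (dmap q.1 q.2, q.2))
    · -- forward membership
      rintro ⟨d, r⟩ hp
      simp only [Finset.mem_coe, Finset.mem_product, mem_range] at hp
      obtain ⟨hd, hr⟩ := hp
      simp only [hGoodF, Finset.mem_filter, Finset.mem_finsuppAntidiag] at hd
      obtain ⟨⟨hdsum, hdsupp⟩, hd0, hdI, hdball⟩ := hd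
      have htail : ∑ t ∈ range n, d (t + 1) + ℓ = n := by
        have h := Finset.sum_range_succ' (⇑d) n
        rw [hdsum, hd0] at h
        omega
      rw [Finset.mem_coe, Finset.mem_sigma]
      constructor
      · -- lmap d r ∈ E
        simp only [hE, Finset.mem_filter, Finset.mem_finsuppAntidiag]
        refine ⟨⟨?_, Finsupp.support_onFinset_subset⟩, ?_⟩
        · -- sum
          have h1 : ∑ j ∈ range n, lmap d r j = ∑ j ∈ range n, d ((j + (n - r)) % n + 1) := by
            apply Finset.sum_congr rfl
            intro j hj
            exact hlm_app d r j (mem_range.mp hj)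
          have h2 : ∑ j ∈ range n, d ((j + (n - r)) % n + 1)
              = ∑ j ∈ range n, d (j + 1) := by
            have h := rot_sum n (fun x => d (x % n + 1)) (n - r)
            simp only [hmm] at h
            calc ∑ j ∈ range n, d ((j + (n - r)) % n + 1)
                = ∑ j ∈ range n, d (j % n + 1) := h
              _ = ∑ j ∈ range n, d (j + 1) := by
                  apply Finset.sum_congr rfl; intro j hj
                  rw [Nat.mod_eq_of_lt (mem_range.mp hj)]
          rw [h1, h2]
          omega
        · -- values in I
          intro i hi
          rw [hlm_app d r i (mem_range.mp hi)]
          exact hdI _ (mem_Icc.mpr ⟨by omega, by have := hmodlt (i + (n - r)); omega⟩)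
      · -- rotation is good
        simp only [Finset.mem_filter, mem_range]
        refine ⟨hr, ?_⟩
        intro i hi
        rw [mem_Icc] at hi
        have h1 : ∑ t ∈ range (i-1), lmap d r ((t + r) % n)
            = ∑ t ∈ range (i-1), d (t + 1) := by
          apply Finset.sum_congr rfl
          intro t ht
          exact hlm_rot d r t hr (by have := mem_range.mp ht; omega)
        rw [h1]
        have h2 := Finset.sum_range_succ' (⇑d) (i - 1)
        have h3 : i - 1 + 1 = i := by omega
        rw [h3] at h2
        have h4 := hdball i (mem_Icc.mpr hi)
        omega
    · -- backward membership
      rintro ⟨l, r⟩ hq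
      rw [Finset.mem_coe, Finset.mem_sigma] at hq
      obtain ⟨hlE, hrg⟩ := hq
      simp only [Finset.mem_filter, mem_range] at hrg
      obtain ⟨hr, hgood⟩ := hrg
      have hlsupp := hsupE l hlE
      simp only [hE, Finset.mem_filter, Finset.mem_finsuppAntidiag] at hlE
      obtain ⟨⟨hlsum, _⟩, hlI⟩ := hlE
      simp only [Finset.mem_coe, Finset.mem_product, mem_range]
      refine ⟨?_, hr⟩
      simp only [hGoodF, Finset.mem_filter, Finset.mem_finsuppAntidiag]
      have htail : ∀ t, t < n → dmap l r (t + 1) = l ((t + r) % n) := by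
        intro t ht
        rw [hdm_app l r (t+1) (by omega) (by omega)]
        simp
      refine ⟨⟨?_, Finsupp.support_onFinset_subset⟩, hdm_zero l r, ?_, ?_⟩
      · -- total sum is n
        have hlsum' : ∑ t ∈ range n, l t = n - ℓ := hlsum
        have h1 := Finset.sum_range_succ' (⇑(dmap l r)) n
        have h2 : ∑ t ∈ range n, dmap l r (t + 1) = ∑ t ∈ range n, l ((t + r) % n) := by
          apply Finset.sum_congr rfl
          intro t ht
          exact htail t (mem_range.mp ht)
        have h3 := hrotsum l r hlsupp
        have h4 := hdm_zero l r
        rw [h2, h3, h4] at h1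
        rw [h1]
        omega
      · -- degrees in I
        intro i hi
        rw [mem_Icc] at hi
        rw [hdm_app l r i hi.1 hi.2]
        exact hlI _ (mem_range.mpr (hmodlt _))
      · -- ballot
        intro i hi
        have hi' := mem_Icc.mp hi
        have h1 := Finset.sum_range_succ' (⇑(dmap l r)) (i - 1)
        have h3 : i - 1 + 1 = i := by omega
        rw [h3] at h1
        have h2 : ∑ t ∈ range (i-1), dmap l r (t + 1)
            = ∑ t ∈ range (i-1), l ((t + r) % n) := by
          apply Finset.sum_congr rfl
          intro t ht
          exact htail t (by have := mem_range.mp ht; omega)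
        have h4 := hgood i hi
        have h5 := hdm_zero l r
        rw [h2, h5] at h1
        omega
    · -- left inverse
      rintro ⟨d, r⟩ hp
      simp only [Finset.mem_coe, Finset.mem_product, mem_range] at hp
      obtain ⟨hd, hr⟩ := hp
      simp only [hGoodF, Finset.mem_filter, Finset.mem_finsuppAntidiag] at hd
      obtain ⟨⟨hdsum, hdsupp⟩, hd0, _, _⟩ := hd
      have hdbig : ∀ i, n < i → d i = 0 := by
        intro i hi
        by_contra hne
        have := hdsupp (Finsupp.mem_support_iff.mpr hne)
        simp only [mem_range] at this
        omega
      refine Prod.ext ?_ rfl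
      apply Finsupp.ext
      intro i
      rcases Nat.eq_zero_or_pos i with rfl | hipos
      · rw [hdm_zero, hd0]
      rcases le_or_gt i n with hin | hin
      · rw [hdm_app _ r i hipos hin]
        have hlt : (i - 1 + r) % n < n := hmodlt _
        rw [hlm_app d r _ hlt, hmod2 (i-1) r hr, Nat.mod_eq_of_lt (by omega)]
        congr 1
        omega
      · rw [hdm_big _ r i hin, hdbig i hin]
    · -- right inverse
      rintro ⟨l, r⟩ hq
      rw [Finset.mem_coe, Finset.mem_sigma] at hq
      obtain ⟨hlE, hrg⟩ := hq
      simp only [Finset.mem_filter, mem_range] at hrg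
      obtain ⟨hr, _⟩ := hrg
      have hlsupp := hsupE l hlE
      have hfst : lmap (dmap l r) r = l := by
        apply Finsupp.ext
        intro j
        rcases le_or_gt n j with hj | hj
        · have h1 : lmap (dmap l r) r j = 0 := by
            show (if j < n then dmap l r ((j + (n - r)) % n + 1) else 0) = 0
            rw [if_neg (by omega)]
          rw [h1, hlsupp j hj]
        · rw [hlm_app _ r j hj]
          have hlt : (j + (n - r)) % n < n := hmodlt _
          rw [hdm_app l r _ (by omega) (by omega)]
          simp only [Nat.add_sub_cancel]
          rw [hmod1 j r hr, Nat.mod_eq_of_lt hj]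
      exact Sigma.ext hfst HEq.rfl
  -- final assembly
  calc n * GoodF.card = GoodF.card * n := by ring
    _ = (GoodF ×ˢ range n).card := by rw [Finset.card_product, Finset.card_range]
    _ = (E.sigma (fun l => (range n).filter (fun r => ∀ i ∈ Icc 1 n,
          (i : ℕ) ≤ ℓ + ∑ t ∈ range (i-1), l ((t + r) % n)))).card := hbij
    _ = ∑ l ∈ E, ((range n).filter (fun r => ∀ i ∈ Icc 1 n,
          (i : ℕ) ≤ ℓ + ∑ t ∈ range (i-1), l ((t + r) % n))).card := Finset.card_sigma _ _
    _ = ∑ _l ∈ E, ℓ := Finset.sum_congr rfl hEgood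
    _ = ℓ * E.card := by rw [Finset.sum_const, smul_eq_mul, mul_comm]
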